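/- (One-substep L²-stability of the Implicit Midpoint Rule substep) Let N ≥ 1, k > 0, b a nonzero real, and K > 0. Suppose real-valued V, Ṽ, Y, Ỹ ∈ S_N satisfy Ṽ = V + k b F((Ṽ + V)/2) and Ỹ = Y + k b F((Ỹ + Y)/2), and suppose ‖Ṽ + V‖_{1,∞} ≤ K, where ‖w‖_{1,∞} = |w|_∞ + |∂_x w|_∞. Then there exists a constant C depending only on K and |b| (not on k or N) such that ‖Ṽ − Ỹ‖ − ‖V − Y‖ ≤ C k ( ‖Ṽ − Ỹ‖ + ‖V − Y‖ ); in particular, there exist k₀ > 0 and C′ depending only on K and |b| such that for k ≤ k₀ one has ‖Ṽ − Ỹ‖ ≤ (1 + C′ k) ‖V − Y‖. -/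

import Mathlib

noncomputable section

namespace KdVSpec

/-- The L² inner product of two real-valued functions on `(-π, π)`. -/
def L2inner (u v : ℝ → ℝ) : ℝ := ∫ x in (-Real.pi)..Real.pi, u x * v x

/-- The L² norm of a real-valued function on `(-π, π)`. -/
def L2norm (u : ℝ → ℝ) : ℝ := Real.sqrt (∫ x in (-Real.pi)..Real.pi, (u x)^2)

/-- The sup norm of a real-valued function on `[-π, π]`. -/
def LinfNorm (u : ℝ → ℝ) : ℝ := sSup ((fun x => |u x|) '' Set.Icc (-Real.pi) Real.pi)

/-- The `W^{1,∞}` norm `‖v‖_{1,∞} = |v|_∞ + |∂ₓ v|_∞`. -/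
def norm1inf (u : ℝ → ℝ) : ℝ := LinfNorm u + LinfNorm (deriv u)

/-- The `k`-th Fourier coefficient of a (2π-periodic) function on `(-π,π)`. -/
def fCoeff (u : ℝ → ℝ) (k : ℤ) : ℂ :=
  (1 / (2 * Real.pi)) *
    ∫ x in (-Real.pi)..Real.pi, Complex.exp (-(Complex.I * (k : ℂ) * (x : ℂ))) * (u x : ℂ)

/-- The periodic Sobolev norm of order `μ`. -/
def sobNorm (μ : ℝ) (u : ℝ → ℝ) : ℝ :=
  Real.sqrt (∑' k : ℤ, (1 + (k : ℝ)^2) ^ μ * ‖fCoeff u k‖^2)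

/-- `v` is a (real-valued) trigonometric polynomial of degree at most `N`,
i.e. a member of `S_N = span{e^{ikx} : |k| ≤ N}`. -/
def InSN (N : ℕ) (v : ℝ → ℝ) : Prop :=
  ∃ c : ℤ → ℂ, ∀ x : ℝ,
    (v x : ℂ) = ∑ k ∈ Finset.Icc (-(N : ℤ)) (N : ℤ), c k * Complex.exp (Complex.I * (k : ℂ) * (x : ℂ))

/-- The orthogonal L²-projection onto `S_N`, `P_N v = Σ_{|k|≤N} v̂(k) e^{ikx}`. -/
def PN (N : ℕ) (u : ℝ → ℝ) : ℝ → ℝ := fun x =>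
  (∑ k ∈ Finset.Icc (-(N : ℤ)) (N : ℤ), fCoeff u k * Complex.exp (Complex.I * (k : ℂ) * (x : ℂ))).re

/-- Spatial derivative `∂ₓ`. -/
def dx (u : ℝ → ℝ) : ℝ → ℝ := deriv u

/-- Third spatial derivative `∂ₓ³`. -/
def dx3 (u : ℝ → ℝ) : ℝ → ℝ := deriv (deriv (deriv u))

/-- The map `F(v) = -∂ₓ³ v - P_N(v ∂ₓ v)` on `S_N`. -/
def Fmap (N : ℕ) (v : ℝ → ℝ) : ℝ → ℝ := fun x =>
  -(dx3 v x) - PN N (fun y => v y * dx v y) x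

/-- `u` solves the periodic KdV equation `u_t + u u_x + u_{xxx} = 0` on the time set `I`
(with 2π-periodicity in space). -/
def IsKdVSolution (u : ℝ → ℝ → ℝ) (I : Set ℝ) : Prop :=
  (∀ t ∈ I, ∀ x : ℝ, u t (x + 2 * Real.pi) = u t x) ∧
  (∀ t ∈ I, ∀ x : ℝ,
    deriv (fun s => u s x) t + u t x * dx (u t) x + dx3 (u t) x = 0)

/-- `w` is the semidiscrete Fourier–Galerkin approximation (with initial value `P_N u₀`)
on the time set `I`: `w(t) ∈ S_N`, `w` is differentiable in time, `w(0) = P_N u₀` and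
`(∂_t w + w ∂ₓ w + ∂ₓ³ w, χ) = 0` for every `χ ∈ S_N`. -/
def SemidiscreteOn (N : ℕ) (u0 : ℝ → ℝ) (w : ℝ → ℝ → ℝ) (I : Set ℝ) : Prop :=
  (∀ t ∈ I, InSN N (w t)) ∧
  (∀ x : ℝ, ∀ t ∈ I, DifferentiableAt ℝ (fun s => w s x) t) ∧
  (∀ x : ℝ, w 0 x = PN N u0 x) ∧
  (∀ t ∈ I, ∀ χ : ℝ → ℝ, InSN N χ →
    L2inner (fun x => deriv (fun s => w s x) t + w t x * dx (w t) x + dx3 (w t) x) χ = 0)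




-- ===== auxiliary infrastructure =====

section Aux
open Complex intervalIntegral MeasureTheory

/-- complex trig polynomial with coefficients `c` over index set `s` -/
def tp (s : Finset ℤ) (c : ℤ → ℂ) (x : ℝ) : ℂ :=
  ∑ k ∈ s, c k * Complex.exp (Complex.I * (k : ℂ) * (x : ℂ))

lemma hasDerivAt_cexp_int (k : ℤ) (x : ℝ) :
    HasDerivAt (fun y : ℝ => Complex.exp (Complex.I * (k:ℂ) * (y:ℂ)))
      (Complex.I * (k:ℂ) * Complex.exp (Complex.I * (k:ℂ) * (x:ℂ))) x := by
  have h0 : HasDerivAt (fun z : ℂ => Complex.I * (k:ℂ) * z) (Complex.I * (k:ℂ)) (x:ℂ) := by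
    simpa using (hasDerivAt_id ((x:ℝ):ℂ)).const_mul (Complex.I * (k:ℂ))
  have h1 := (Complex.hasDerivAt_exp (Complex.I * (k:ℂ) * (x:ℂ))).comp ((x:ℝ):ℂ) h0
  have h2 := h1.comp_ofReal
  have : (fun y : ℝ => (Complex.exp ∘ fun z : ℂ => Complex.I * (k:ℂ) * z) (y:ℂ))
      = fun y : ℝ => Complex.exp (Complex.I * (k:ℂ) * (y:ℂ)) := rfl
  rw [this] at h2
  convert h2 using 1
  ring

lemma tp_hasDerivAt (s : Finset ℤ) (c : ℤ → ℂ) (x : ℝ) :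
    HasDerivAt (fun y => tp s c y) (tp s (fun k => Complex.I * (k:ℂ) * c k) x) x := by
  unfold tp
  refine HasDerivAt.fun_sum fun k _ => ?_
  have := (hasDerivAt_cexp_int k x).const_mul (c k)
  simpa [mul_comm, mul_assoc, mul_left_comm] using this

lemma continuous_tp (s : Finset ℤ) (c : ℤ → ℂ) : Continuous (fun y => tp s c y) :=
  continuous_finset_sum _ fun k _ => by
    exact continuous_const.mul (Complex.continuous_exp.comp (by continuity))

lemma tp_periodic (s : Finset ℤ) (c : ℤ → ℂ) (x : ℝ) :
    tp s c (x + 2 * Real.pi) = tp s c x := by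
  unfold tp
  refine Finset.sum_congr rfl fun k _ => ?_
  have : Complex.exp (Complex.I * (k:ℂ) * ((x + 2*Real.pi : ℝ) : ℂ))
      = Complex.exp (Complex.I * (k:ℂ) * (x:ℂ)) * Complex.exp ((k:ℂ) * (2 * Real.pi * Complex.I)) := by
    rw [← Complex.exp_add]; push_cast; ring_nf
  rw [this, Complex.exp_int_mul_two_pi_mul_I, mul_one]


/-- `v` is a real-valued function represented by the trig polynomial with coeffs `c` on `s`. -/
def Rep (s : Finset ℤ) (c : ℤ → ℂ) (v : ℝ → ℝ) : Prop := ∀ x, ((v x : ℝ) : ℂ) = tp s c x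

def Dc (c : ℤ → ℂ) : ℤ → ℂ := fun k => Complex.I * (k:ℂ) * c k

namespace Rep
variable {s : Finset ℤ} {c d : ℤ → ℂ} {v w : ℝ → ℝ}

lemma re_eq (h : Rep s c v) (x : ℝ) : v x = (tp s c x).re := by
  rw [← h x]; simp

lemma im_eq (h : Rep s c v) (x : ℝ) : (tp s c x).im = 0 := by
  rw [← h x]; simp

lemma hasDerivAt (h : Rep s c v) (x : ℝ) : HasDerivAt v ((tp s (Dc c) x).re) x := by
  have h1 : HasDerivAt (fun y => (tp s c y).re) ((tp s (Dc c) x).re) x :=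
    (Complex.reCLM.hasFDerivAt.comp_hasDerivAt x (tp_hasDerivAt s c x))
  have : v = fun y => (tp s c y).re := funext fun y => h.re_eq y
  rw [this]; exact h1

lemma hasDerivAt_im (h : Rep s c v) (x : ℝ) :
    HasDerivAt (fun y => (tp s c y).im) ((tp s (Dc c) x).im) x :=
  (Complex.imCLM.hasFDerivAt.comp_hasDerivAt x (tp_hasDerivAt s c x))

lemma differentiable (h : Rep s c v) : Differentiable ℝ v := fun x => (h.hasDerivAt x).differentiableAt

lemma deriv_eq (h : Rep s c v) : Rep s (Dc c) (deriv v) := by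
  intro x
  have hre : deriv v x = (tp s (Dc c) x).re := (h.hasDerivAt x).deriv
  have him : (tp s (Dc c) x).im = 0 := by
    have h2 : (fun y => (tp s c y).im) = fun _ => (0:ℝ) := funext fun y => h.im_eq y
    have := (h.hasDerivAt_im x).deriv
    rw [h2] at this
    simp at this
    exact this.symm
  apply Complex.ext <;> simp [hre, him]

lemma continuous (h : Rep s c v) : Continuous v := by
  have : v = fun y => (tp s c y).re := funext fun y => h.re_eq y
  rw [this]; exact Complex.continuous_re.comp (continuous_tp s c)

lemma periodic (h : Rep s c v) (x : ℝ) : v (x + 2 * Real.pi) = v x := by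
  have := tp_periodic s c x
  have h1 := h (x + 2 * Real.pi); have h2 := h x
  exact_mod_cast h1.trans (this.trans h2.symm)

lemma sub (h : Rep s c v) (h' : Rep s d w) : Rep s (c - d) (fun x => v x - w x) := by
  intro x
  push_cast
  rw [h x, h' x]
  unfold tp
  rw [← Finset.sum_sub_distrib]
  congr 1; funext k; simp [sub_mul]

lemma smul (h : Rep s c v) (r : ℝ) : Rep s (fun k => r * c k) (fun x => r * v x) := by
  intro x
  push_cast
  rw [h x]
  unfold tp
  rw [Finset.mul_sum]
  congr 1; funext k; ring

lemma add (h : Rep s c v) (h' : Rep s d w) : Rep s (c + d) (fun x => v x + w x) := by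
  intro x
  push_cast
  rw [h x, h' x]
  unfold tp
  rw [← Finset.sum_add_distrib]
  congr 1; funext k; simp [add_mul]

end Rep

lemma neg_one_zpow_inv (n : ℤ) : ((-1 : ℂ) ^ n)⁻¹ = (-1:ℂ)^n := by
  rw [← inv_zpow]; norm_num

lemma integral_cexp_int (n : ℤ) :
    (∫ x in (-Real.pi)..Real.pi, Complex.exp (Complex.I * (n:ℂ) * (x:ℂ)))
      = if n = 0 then (2 * Real.pi : ℂ) else 0 := by
  by_cases hn : n = 0
  · simp [hn]; push_cast; ring
  · have hc : (Complex.I * (n:ℂ)) ≠ 0 := by simp [Complex.I_ne_zero, hn]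
    have key := integral_exp_mul_complex (a := -Real.pi) (b := Real.pi) hc
    simp only [if_neg hn]
    rw [key]
    have e1 : Complex.exp (Complex.I * (n:ℂ) * (Real.pi : ℂ)) = (-1 : ℂ) ^ n := by
      rw [show Complex.I * (n:ℂ) * (Real.pi:ℂ) = (n:ℂ) * ((Real.pi:ℂ) * Complex.I) by ring,
        Complex.exp_int_mul, Complex.exp_pi_mul_I]
    have e2 : Complex.exp (Complex.I * (n:ℂ) * ((-Real.pi : ℝ) : ℂ)) = (-1 : ℂ) ^ n := by
      push_cast
      rw [show Complex.I * (n:ℂ) * (-(Real.pi:ℂ)) = ((-n : ℤ):ℂ) * ((Real.pi:ℂ) * Complex.I) by push_cast; ring,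
        Complex.exp_int_mul, Complex.exp_pi_mul_I, zpow_neg, neg_one_zpow_inv]
    rw [e1, e2]
    simp


lemma continuous_E (k : ℤ) : Continuous (fun x : ℝ => Complex.exp (Complex.I * (k:ℂ) * (x:ℂ))) :=
  Complex.continuous_exp.comp (by continuity)

/-- ∫ e^{ikx} χ(x) dx = 2π d(-k) for χ ∈ S_N with coefficients d. -/
lemma integral_exp_mul_rep {s : Finset ℤ} {d : ℤ → ℂ} {χ : ℝ → ℝ} (hχ : Rep s d χ) (k : ℤ) :
    (∫ x in (-Real.pi)..Real.pi, Complex.exp (Complex.I * (k:ℂ) * (x:ℂ)) * ((χ x : ℝ):ℂ))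
      = if -k ∈ s then (2 * Real.pi : ℂ) * d (-k) else 0 := by
  have h1 : ∀ x : ℝ, Complex.exp (Complex.I * (k:ℂ) * (x:ℂ)) * ((χ x : ℝ):ℂ)
      = ∑ j ∈ s, d j * Complex.exp (Complex.I * ((k + j : ℤ):ℂ) * (x:ℂ)) := by
    intro x
    rw [hχ x]
    unfold tp
    rw [Finset.mul_sum]
    refine Finset.sum_congr rfl fun j _ => ?_
    rw [mul_left_comm, ← Complex.exp_add]
    push_cast
    ring_nf
  simp only [h1]
  rw [intervalIntegral.integral_finset_sum]
  · have : ∀ j ∈ s, (∫ x in (-Real.pi)..Real.pi,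
        d j * Complex.exp (Complex.I * ((k + j : ℤ):ℂ) * (x:ℂ)))
        = d j * (if k + j = 0 then (2 * Real.pi : ℂ) else 0) := by
      intro j _
      rw [intervalIntegral.integral_const_mul, integral_cexp_int]
    rw [Finset.sum_congr rfl this]
    by_cases hk : -k ∈ s
    · rw [Finset.sum_eq_single (-k)]
      · simp [if_neg, hk]; ring
      · intro j hj hjne
        have : ¬ (k + j = 0) := by omega
        simp [this]
      · intro h; exact absurd hk h
    · rw [if_neg hk, Finset.sum_eq_zero]
      intro j hj
      have hne : ¬ (k + j = 0) := by
        intro h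
        have : j = -k := by omega
        exact hk (this ▸ hj)
      simp [hne]
  · intro j _
    exact (continuous_const.mul (continuous_E _)).intervalIntegrable _ _

/-- ∫ g(x) e^{ijx} dx = 2π · fCoeff g (-j). -/
lemma integral_mul_exp_eq_fCoeff (g : ℝ → ℝ) (j : ℤ) :
    (∫ x in (-Real.pi)..Real.pi, Complex.exp (Complex.I * (j:ℂ) * (x:ℂ)) * ((g x : ℝ):ℂ))
      = (2 * Real.pi : ℂ) * fCoeff g (-j) := by
  unfold fCoeff
  have : ∀ x : ℝ, Complex.exp (-(Complex.I * ((-j : ℤ):ℂ) * (x:ℂ))) = Complex.exp (Complex.I * (j:ℂ) * (x:ℂ)) := by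
    intro x; congr 1; push_cast; ring
  simp only [this]
  rw [← mul_assoc]
  have hpi : (2 * Real.pi : ℂ) ≠ 0 := by
    simp [Real.pi_ne_zero]
  field_simp


lemma re_mul_ofReal (z : ℂ) (r : ℝ) : z.re * r = (z * (r:ℂ)).re := by
  simp [Complex.mul_re]

lemma integral_re_eq {f : ℝ → ℂ} (hf : IntervalIntegrable f MeasureTheory.volume (-Real.pi) Real.pi) :
    (∫ x in (-Real.pi)..Real.pi, (f x).re) = (∫ x in (-Real.pi)..Real.pi, f x).re := by
  exact (Complex.reCLM.intervalIntegral_comp_comm hf)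

lemma inner_PN_eq {N : ℕ} (g : ℝ → ℝ) (hg : Continuous g) {d : ℤ → ℂ} {χ : ℝ → ℝ}
    (hχ : Rep (Finset.Icc (-(N:ℤ)) (N:ℤ)) d χ) :
    L2inner (PN N g) χ = L2inner g χ := by
  have hχc : Continuous χ := hχ.continuous
  have hIcc : ∀ k : ℤ, k ∈ Finset.Icc (-(N:ℤ)) (N:ℤ) → -k ∈ Finset.Icc (-(N:ℤ)) (N:ℤ) := by
    intro k hk; simp only [Finset.mem_Icc] at *; omega
  -- LHS
  have hL : L2inner (PN N g) χ
      = ((∑ k ∈ Finset.Icc (-(N:ℤ)) (N:ℤ), fCoeff g k *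
          ∫ x in (-Real.pi)..Real.pi, Complex.exp (Complex.I * (k:ℂ) * (x:ℂ)) * ((χ x : ℝ):ℂ))).re := by
    unfold L2inner PN
    have h1 : ∀ x : ℝ, (∑ k ∈ Finset.Icc (-(N:ℤ)) (N:ℤ), fCoeff g k *
          Complex.exp (Complex.I * (k:ℂ) * (x:ℂ))).re * χ x
        = (∑ k ∈ Finset.Icc (-(N:ℤ)) (N:ℤ), fCoeff g k *
          (Complex.exp (Complex.I * (k:ℂ) * (x:ℂ)) * ((χ x : ℝ):ℂ))).re := by
      intro x
      rw [re_mul_ofReal, Finset.sum_mul]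
      congr 1
      refine Finset.sum_congr rfl fun k _ => by ring
    simp only [h1]
    rw [integral_re_eq]
    · congr 1
      rw [intervalIntegral.integral_finset_sum]
      · refine Finset.sum_congr rfl fun k _ => ?_
        rw [intervalIntegral.integral_const_mul]
      · intro k _
        exact (continuous_const.mul ((continuous_E k).mul
          (Complex.continuous_ofReal.comp hχc))).intervalIntegrable _ _
    · exact (continuous_finset_sum _ fun k _ => continuous_const.mul ((continuous_E k).mul
        (Complex.continuous_ofReal.comp hχc))).intervalIntegrable _ _
  -- RHS
  have hR : L2inner g χ
      = ((∑ j ∈ Finset.Icc (-(N:ℤ)) (N:ℤ), d j *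
          ∫ x in (-Real.pi)..Real.pi, Complex.exp (Complex.I * (j:ℂ) * (x:ℂ)) * ((g x : ℝ):ℂ))).re := by
    unfold L2inner
    have h1 : ∀ x : ℝ, g x * χ x
        = (∑ j ∈ Finset.Icc (-(N:ℤ)) (N:ℤ), d j *
            (Complex.exp (Complex.I * (j:ℂ) * (x:ℂ)) * ((g x : ℝ):ℂ))).re := by
      intro x
      have : ((g x * χ x : ℝ) : ℂ)
          = ∑ j ∈ Finset.Icc (-(N:ℤ)) (N:ℤ), d j *
            (Complex.exp (Complex.I * (j:ℂ) * (x:ℂ)) * ((g x : ℝ):ℂ)) := by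
        push_cast
        rw [mul_comm, hχ x]
        unfold tp
        rw [Finset.sum_mul]
        refine Finset.sum_congr rfl fun j _ => by ring
      calc g x * χ x = ((g x * χ x : ℝ) : ℂ).re := by simp
        _ = _ := by rw [this]
    simp only [h1]
    rw [integral_re_eq]
    · congr 1
      rw [intervalIntegral.integral_finset_sum]
      · refine Finset.sum_congr rfl fun j _ => by rw [intervalIntegral.integral_const_mul]
      · intro j _
        exact (continuous_const.mul ((continuous_E j).mul
          (Complex.continuous_ofReal.comp hg))).intervalIntegrable _ _
    · exact (continuous_finset_sum _ fun j _ => continuous_const.mul ((continuous_E j).mul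
        (Complex.continuous_ofReal.comp hg))).intervalIntegrable _ _
  rw [hL, hR]
  congr 1
  rw [Finset.sum_nbij' (i := fun k : ℤ => -k) (j := fun k : ℤ => -k)]
  · intro k hk; exact hIcc k hk
  · intro k hk; exact hIcc k hk
  · intro k _; simp
  · intro k _; simp
  · intro k hk
    rw [integral_exp_mul_rep hχ, integral_mul_exp_eq_fCoeff, if_pos (hIcc k hk)]
    simp only [neg_neg]
    ring

lemma pi_le : (-Real.pi) ≤ Real.pi := by nlinarith [Real.pi_pos]

/-- integration by parts for periodic C¹ functions on [-π,π] -/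
lemma parts_eq {u w : ℝ → ℝ} (hu : Differentiable ℝ u) (hw : Differentiable ℝ w)
    (hu' : Continuous (deriv u)) (hw' : Continuous (deriv w))
    (hup : u Real.pi = u (-Real.pi)) (hwp : w Real.pi = w (-Real.pi)) :
    (∫ x in (-Real.pi)..Real.pi, deriv u x * w x)
      = -∫ x in (-Real.pi)..Real.pi, u x * deriv w x := by
  have h := intervalIntegral.integral_deriv_mul_eq_sub_of_hasDerivAt
    (a := -Real.pi) (b := Real.pi) (u := u) (v := w) (u' := deriv u) (v' := deriv w)
    hu.continuous.continuousOn hw.continuous.continuousOn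
    (fun x _ => (hu x).hasDerivAt) (fun x _ => (hw x).hasDerivAt)
    (hu'.intervalIntegrable _ _) (hw'.intervalIntegrable _ _)
  rw [hup, hwp] at h
  simp only [sub_self] at h
  have hsplit : (∫ x in (-Real.pi)..Real.pi, deriv u x * w x + u x * deriv w x)
      = (∫ x in (-Real.pi)..Real.pi, deriv u x * w x)
        + ∫ x in (-Real.pi)..Real.pi, u x * deriv w x := by
    exact intervalIntegral.integral_add
      ((hu'.mul hw.continuous).intervalIntegrable _ _)
      ((hu.continuous.mul hw').intervalIntegrable _ _)
  rw [hsplit] at h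
  linarith


lemma continuous_PN (N : ℕ) (g : ℝ → ℝ) : Continuous (PN N g) := by
  unfold PN
  exact Complex.continuous_re.comp (continuous_finset_sum _ fun k _ =>
    continuous_const.mul (continuous_E k))

lemma Rep.periodic_pi {s c v} (h : Rep s c v) : v Real.pi = v (-Real.pi) := by
  have := h.periodic (-Real.pi)
  rwa [show -Real.pi + 2 * Real.pi = Real.pi by ring] at this

lemma tp_sub_c (s : Finset ℤ) (c d : ℤ → ℂ) (x : ℝ) :
    tp s (c - d) x = tp s c x - tp s d x := by
  unfold tp; rw [← Finset.sum_sub_distrib]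
  exact Finset.sum_congr rfl fun k _ => by simp [sub_mul]

lemma Dc_sub (c d : ℤ → ℂ) : Dc (c - d) = Dc c - Dc d := by
  funext k; simp [Dc]; ring

/-- The key integral identity: (F(p)-F(q), p-q) = -(1/2)∫ p' (p-q)². -/
lemma key_identity (N : ℕ) {cp cq : ℤ → ℂ} {p q : ℝ → ℝ}
    (hp : Rep (Finset.Icc (-(N:ℤ)) (N:ℤ)) cp p)
    (hq : Rep (Finset.Icc (-(N:ℤ)) (N:ℤ)) cq q) :
    (∫ x in (-Real.pi)..Real.pi, (Fmap N p x - Fmap N q x) * (p x - q x))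
      = -(1/2) * ∫ x in (-Real.pi)..Real.pi, deriv p x * (p x - q x)^2 := by
  set s := Finset.Icc (-(N:ℤ)) (N:ℤ) with hs
  set e : ℝ → ℝ := fun x => p x - q x with he_def
  have he : Rep s (cp - cq) e := hp.sub hq
  have he1 : Rep s (Dc (cp - cq)) (deriv e) := he.deriv_eq
  have he2 : Rep s (Dc (Dc (cp - cq))) (deriv (deriv e)) := he1.deriv_eq
  have he3 : Rep s (Dc (Dc (Dc (cp - cq)))) (deriv (deriv (deriv e))) := he2.deriv_eq
  have hp1 := hp.deriv_eq; have hp2 := hp1.deriv_eq; have hp3 := hp2.deriv_eq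
  have hq1 := hq.deriv_eq; have hq2 := hq1.deriv_eq; have hq3 := hq2.deriv_eq
  -- dx3 p - dx3 q = dx3 e pointwise
  have hdx3 : ∀ x, dx3 p x - dx3 q x = dx3 e x := by
    intro x
    have h1 : dx3 p x = (tp s (Dc (Dc (Dc cp))) x).re := hp3.re_eq x
    have h2 : dx3 q x = (tp s (Dc (Dc (Dc cq))) x).re := hq3.re_eq x
    have h3 : dx3 e x = (tp s (Dc (Dc (Dc (cp - cq)))) x).re := he3.re_eq x
    rw [h1, h2, h3, Dc_sub, Dc_sub, Dc_sub, tp_sub_c]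
    simp
  -- derivative of e as difference
  have hde : ∀ x, deriv e x = deriv p x - deriv q x := by
    intro x
    exact (((hp.differentiable x).hasDerivAt).sub ((hq.differentiable x).hasDerivAt)).deriv
  -- ∫ (dx3 e) e = 0
  have hskew : (∫ x in (-Real.pi)..Real.pi, dx3 e x * e x) = 0 := by
    have step1 : (∫ x in (-Real.pi)..Real.pi, dx3 e x * e x)
        = -∫ x in (-Real.pi)..Real.pi, deriv (deriv e) x * deriv e x := by
      exact parts_eq he2.differentiable he.differentiable he3.continuous he1.continuous
        he2.periodic_pi he.periodic_pi
    have step2 : (∫ x in (-Real.pi)..Real.pi, deriv (deriv e) x * deriv e x)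
        = -∫ x in (-Real.pi)..Real.pi, deriv e x * deriv (deriv e) x := by
      exact parts_eq he1.differentiable he1.differentiable he2.continuous he2.continuous
        he1.periodic_pi he1.periodic_pi
    have : (∫ x in (-Real.pi)..Real.pi, deriv (deriv e) x * deriv e x) = 0 := by
      have comm : (∫ x in (-Real.pi)..Real.pi, deriv e x * deriv (deriv e) x)
          = ∫ x in (-Real.pi)..Real.pi, deriv (deriv e) x * deriv e x := by
        congr 1; funext x; ring
      rw [comm] at step2; linarith
    rw [step1, this, neg_zero]
  -- ∫ e² e' = 0
  have hcube : (∫ x in (-Real.pi)..Real.pi, (e x)^2 * deriv e x) = 0 := by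
    have hF : ∀ x : ℝ, HasDerivAt (fun y => (e y)^3 / 3) ((e x)^2 * deriv e x) x := by
      intro x
      have := (((he.differentiable x).hasDerivAt).fun_pow 3).div_const 3
      refine this.congr_deriv ?_
      push_cast; ring
    have := intervalIntegral.integral_eq_sub_of_hasDerivAt (a := -Real.pi) (b := Real.pi)
      (fun x _ => hF x) (((he.continuous.pow 2).mul he1.continuous).intervalIntegrable _ _)
    rw [this, he.periodic_pi, sub_self]
  -- ∫ p e e' = -(1/2) ∫ p' e²
  have hparts : (∫ x in (-Real.pi)..Real.pi, p x * ((e x) * deriv e x))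
      = -(1/2) * ∫ x in (-Real.pi)..Real.pi, deriv p x * (e x)^2 := by
    have hw : Differentiable ℝ (fun x => (e x)^2) := fun x =>
      ((he.differentiable x).pow 2)
    have hw' : ∀ x, deriv (fun y => (e y)^2) x = 2 * e x * deriv e x := by
      intro x
      have hd := (((he.differentiable x).hasDerivAt).fun_pow 2).deriv
      rw [hd]; norm_num
    have hw'c : Continuous (deriv (fun y => (e y)^2)) := by
      have : (deriv (fun y => (e y)^2)) = fun x => 2 * e x * deriv e x := funext hw'
      rw [this]
      exact (continuous_const.mul he.continuous).mul he1.continuous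
    have hP := parts_eq hp.differentiable hw hp1.continuous hw'c hp.periodic_pi
      (by show (e Real.pi)^2 = (e (-Real.pi))^2; rw [he.periodic_pi])
    -- hP : ∫ p' e² = -∫ p (e²)'
    have hrw : (∫ x in (-Real.pi)..Real.pi, p x * deriv (fun y => (e y)^2) x)
        = 2 * ∫ x in (-Real.pi)..Real.pi, p x * (e x * deriv e x) := by
      rw [← intervalIntegral.integral_const_mul]
      congr 1; funext x; rw [hw' x]; ring
    rw [hrw] at hP
    linarith
  -- inner products with PN
  have hPN : (∫ x in (-Real.pi)..Real.pi,
        (PN N (fun y => p y * dx p y) x - PN N (fun y => q y * dx q y) x) * e x)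
      = ∫ x in (-Real.pi)..Real.pi, (p x * dx p x - q x * dx q x) * e x := by
    have hgp : Continuous (fun y => p y * dx p y) := hp.continuous.mul hp1.continuous
    have hgq : Continuous (fun y => q y * dx q y) := hq.continuous.mul hq1.continuous
    have hPNgp : Continuous (PN N (fun y => p y * dx p y)) := continuous_PN _ _
    have hPNgq : Continuous (PN N (fun y => q y * dx q y)) := continuous_PN _ _
    have e1 : (∫ x in (-Real.pi)..Real.pi,
          (PN N (fun y => p y * dx p y) x - PN N (fun y => q y * dx q y) x) * e x)
        = L2inner (PN N (fun y => p y * dx p y)) e - L2inner (PN N (fun y => q y * dx q y)) e := by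
      unfold L2inner
      rw [← intervalIntegral.integral_sub ((hPNgp.fun_mul he.continuous).intervalIntegrable _ _)
        ((hPNgq.fun_mul he.continuous).intervalIntegrable _ _)]
      congr 1; funext x; ring
    have e2 : (∫ x in (-Real.pi)..Real.pi, (p x * dx p x - q x * dx q x) * e x)
        = L2inner (fun y => p y * dx p y) e - L2inner (fun y => q y * dx q y) e := by
      unfold L2inner
      rw [← intervalIntegral.integral_sub ((hgp.fun_mul he.continuous).intervalIntegrable _ _)
        ((hgq.fun_mul he.continuous).intervalIntegrable _ _)]
      congr 1; funext x; ring
    rw [e1, e2, inner_PN_eq _ hgp he, inner_PN_eq _ hgq he]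
  -- nonlinear term rewrite: (p p' - q q') e = p (e e') + p' e² - e² e'
  have hnl : (∫ x in (-Real.pi)..Real.pi, (p x * dx p x - q x * dx q x) * e x)
      = (∫ x in (-Real.pi)..Real.pi, p x * (e x * deriv e x))
        + (∫ x in (-Real.pi)..Real.pi, deriv p x * (e x)^2)
        - ∫ x in (-Real.pi)..Real.pi, (e x)^2 * deriv e x := by
    have hpt : ∀ x, (p x * dx p x - q x * dx q x) * e x
        = p x * (e x * deriv e x) + deriv p x * (e x)^2 - (e x)^2 * deriv e x := by
      intro x
      have hq_eq : q x = p x - e x := by simp [he_def]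
      have hq'_eq : deriv q x = deriv p x - deriv e x := by
        have := hde x; linarith
      unfold dx
      rw [hq_eq, hq'_eq]
      ring
    rw [intervalIntegral.integral_congr (g := fun x => p x * (e x * deriv e x)
        + deriv p x * (e x)^2 - (e x)^2 * deriv e x) (fun x _ => hpt x)]
    rw [intervalIntegral.integral_sub, intervalIntegral.integral_add]
    · exact (hp.continuous.mul (he.continuous.mul he1.continuous)).intervalIntegrable _ _
    · exact (hp1.continuous.mul (he.continuous.pow 2)).intervalIntegrable _ _
    · exact ((hp.continuous.mul (he.continuous.mul he1.continuous)).add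
        (hp1.continuous.mul (he.continuous.pow 2))).intervalIntegrable _ _
    · exact ((he.continuous.pow 2).mul he1.continuous).intervalIntegrable _ _
  -- assemble
  have hsplitF : (∫ x in (-Real.pi)..Real.pi, (Fmap N p x - Fmap N q x) * (p x - q x))
      = (-∫ x in (-Real.pi)..Real.pi, dx3 e x * e x)
        - ∫ x in (-Real.pi)..Real.pi,
            (PN N (fun y => p y * dx p y) x - PN N (fun y => q y * dx q y) x) * e x := by
    have hpt : ∀ x, (Fmap N p x - Fmap N q x) * (p x - q x)
        = -(dx3 e x * e x)
          - (PN N (fun y => p y * dx p y) x - PN N (fun y => q y * dx q y) x) * e x := by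
      intro x
      unfold Fmap
      have h3 := hdx3 x
      have hex : e x = p x - q x := rfl
      rw [← hex, ← h3]
      ring
    rw [intervalIntegral.integral_congr (fun x _ => hpt x)]
    rw [intervalIntegral.integral_sub, intervalIntegral.integral_neg]
    · have hdx3c : Continuous (fun x => dx3 e x * e x) := by
        have : Continuous (dx3 e) := he3.continuous
        exact this.mul he.continuous
      exact hdx3c.neg.intervalIntegrable _ _
    · exact (((continuous_PN N _).sub (continuous_PN N _)).mul
        he.continuous).intervalIntegrable _ _
  rw [hsplitF, hskew, hPN, hnl, hparts, hcube]
  ring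

lemma Rep.midpoint {s c d v w} (h : Rep s c v) (h' : Rep s d w) :
    Rep s (fun k => (c k + d k)/2) (fun x => (v x + w x)/2) := by
  intro x
  push_cast
  rw [h x, h' x]
  unfold tp
  rw [← Finset.sum_add_distrib, Finset.sum_div]
  refine Finset.sum_congr rfl fun k _ => by ring

lemma abs_le_LinfNorm {u : ℝ → ℝ} (hu : Continuous u) {x : ℝ}
    (hx : x ∈ Set.Icc (-Real.pi) Real.pi) : |u x| ≤ LinfNorm u := by
  apply le_csSup
  · exact IsCompact.bddAbove_image isCompact_Icc hu.abs.continuousOn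
  · exact ⟨x, hx, rfl⟩

lemma LinfNorm_nonneg {u : ℝ → ℝ} (hu : Continuous u) : 0 ≤ LinfNorm u := by
  have h0 : (0:ℝ) ∈ Set.Icc (-Real.pi) Real.pi :=
    ⟨by nlinarith [Real.pi_pos], Real.pi_pos.le⟩
  exact le_trans (abs_nonneg _) (abs_le_LinfNorm hu h0)

lemma L2norm_sq (u : ℝ → ℝ) (h : 0 ≤ ∫ x in (-Real.pi)..Real.pi, (u x)^2) :
    (L2norm u)^2 = ∫ x in (-Real.pi)..Real.pi, (u x)^2 := Real.sq_sqrt h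

lemma stability_algebra1 {A B t : ℝ} (hA : 0 ≤ A) (hB : 0 ≤ B) (ht : 0 ≤ t)
    (h : A^2 - B^2 ≤ t*(A^2+B^2)) : A - B ≤ t*(A+B) := by
  rcases eq_or_lt_of_le (by positivity : (0:ℝ) ≤ A + B) with h0 | hpos
  · have hA0 : A = 0 := by linarith
    have hB0 : B = 0 := by linarith
    rw [hA0, hB0]; simp
  · have hprod : (A - B) * (A + B) ≤ (t * (A+B)) * (A + B) := by
      nlinarith [mul_nonneg ht (mul_nonneg hA hB)]
    exact le_of_mul_le_mul_right hprod hpos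

lemma stability_algebra2 {A B t : ℝ} (hA : 0 ≤ A) (hB : 0 ≤ B) (ht : 0 ≤ t)
    (ht2 : t ≤ 1/2) (h1 : A - B ≤ t*(A+B)) : A ≤ (1 + 4*t)*B := by
  by_contra hcon
  push_neg at hcon
  have hg : 0 < A - B - 4*t*B := by nlinarith
  have hh1 : 0 ≤ t * (A - B - 4*t*B) := mul_nonneg ht hg.le
  have hh2 : t * (t * B) ≤ (1/2) * (t*B) :=
    mul_le_mul_of_nonneg_right ht2 (mul_nonneg ht hB)
  nlinarith


end Aux

open MeasureTheory

/-- one-substep L²-stability of the Implicit Midpoint Rule substep. -/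
theorem IMR_substep_stability
    (b : ℝ) (hb : b ≠ 0) (K : ℝ) (hK : 0 < K) :
    ∃ C : ℝ, ∃ k₀ : ℝ, 0 < k₀ ∧ ∃ C' : ℝ,
      ∀ N : ℕ, 1 ≤ N → ∀ k : ℝ, 0 < k →
      ∀ V Vt Y Yt : ℝ → ℝ,
        InSN N V → InSN N Vt → InSN N Y → InSN N Yt →
        (∀ x : ℝ, Vt x = V x + k * b * Fmap N (fun y => (Vt y + V y) / 2) x) →
        (∀ x : ℝ, Yt x = Y x + k * b * Fmap N (fun y => (Yt y + Y y) / 2) x) →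
        norm1inf (fun x => Vt x + V x) ≤ K →
        (L2norm (fun x => Vt x - Yt x) - L2norm (fun x => V x - Y x)
            ≤ C * k * (L2norm (fun x => Vt x - Yt x) + L2norm (fun x => V x - Y x))) ∧
        (k ≤ k₀ →
          L2norm (fun x => Vt x - Yt x) ≤ (1 + C' * k) * L2norm (fun x => V x - Y x)) := by
  have hCpos : 0 < |b| * K / 4 := by
    have := abs_pos.mpr hb
    positivity
  set C : ℝ := |b| * K / 4 with hCdef
  refine ⟨C, 1/(2*C), by positivity, 4*C, ?_⟩
  intro N _ k hk V Vt Y Yt hV hVt hY hYt hVe hYe hnorm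
  obtain ⟨cV, hcV⟩ := hV
  obtain ⟨cVt, hcVt⟩ := hVt
  obtain ⟨cY, hcY⟩ := hY
  obtain ⟨cYt, hcYt⟩ := hYt
  set s : Finset ℤ := Finset.Icc (-(N:ℤ)) (N:ℤ) with hs
  have hRV : Rep s cV V := fun x => (hcV x).trans rfl
  have hRVt : Rep s cVt Vt := fun x => (hcVt x).trans rfl
  have hRY : Rep s cY Y := fun x => (hcY x).trans rfl
  have hRYt : Rep s cYt Yt := fun x => (hcYt x).trans rfl
  have hp : Rep s (fun j => (cVt j + cV j)/2) (fun y => (Vt y + V y) / 2) :=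
    hRVt.midpoint hRV
  have hq : Rep s (fun j => (cYt j + cY j)/2) (fun y => (Yt y + Y y) / 2) :=
    hRYt.midpoint hRY
  have KEY := key_identity N hp hq
  -- continuity facts
  have hpc : Continuous (fun y => (Vt y + V y) / 2) := hp.continuous
  have hqc : Continuous (fun y => (Yt y + Y y) / 2) := hq.continuous
  have hp1c : Continuous (deriv (fun y => (Vt y + V y) / 2)) := hp.deriv_eq.continuous
  have hθc : Continuous (fun x => Vt x - Yt x) := hRVt.continuous.sub hRYt.continuous
  have hηc : Continuous (fun x => V x - Y x) := hRV.continuous.sub hRY.continuous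
  have hFpc : Continuous (Fmap N (fun y => (Vt y + V y) / 2)) := by
    unfold Fmap
    exact (hp.deriv_eq.deriv_eq.deriv_eq.continuous.neg).sub (continuous_PN N _)
  have hFqc : Continuous (Fmap N (fun y => (Yt y + Y y) / 2)) := by
    unfold Fmap
    exact (hq.deriv_eq.deriv_eq.deriv_eq.continuous.neg).sub (continuous_PN N _)
  -- the three basic integrals
  set I2 : ℝ := ∫ x in (-Real.pi)..Real.pi, (Vt x - Yt x)^2 with hI2def
  set J2 : ℝ := ∫ x in (-Real.pi)..Real.pi, (V x - Y x)^2 with hJ2def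
  set E2 : ℝ := ∫ x in (-Real.pi)..Real.pi,
      ((Vt x + V x) / 2 - (Yt x + Y x) / 2)^2 with hE2def
  set X : ℝ := ∫ x in (-Real.pi)..Real.pi,
      deriv (fun y => (Vt y + V y) / 2) x * ((Vt x + V x) / 2 - (Yt x + Y x) / 2)^2 with hXdef
  have hI2 : 0 ≤ I2 := intervalIntegral.integral_nonneg pi_le (fun x _ => sq_nonneg _)
  have hJ2 : 0 ≤ J2 := intervalIntegral.integral_nonneg pi_le (fun x _ => sq_nonneg _)
  have hE2 : 0 ≤ E2 := intervalIntegral.integral_nonneg pi_le (fun x _ => sq_nonneg _)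
  -- I2 - J2 = -(k*b) * X
  have hdelta : I2 - J2 = -(k*b) * X := by
    have hsplit : I2 - J2 = ∫ x in (-Real.pi)..Real.pi, ((Vt x - Yt x)^2 - (V x - Y x)^2) := by
      rw [hI2def, hJ2def,
        ← intervalIntegral.integral_sub ((hθc.fun_pow 2).intervalIntegrable _ _)
          ((hηc.fun_pow 2).intervalIntegrable _ _)]
    have hpt : ∀ x, (Vt x - Yt x)^2 - (V x - Y x)^2
        = (2*(k*b)) * ((Fmap N (fun y => (Vt y + V y) / 2) x
            - Fmap N (fun y => (Yt y + Y y) / 2) x)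
          * ((fun y => (Vt y + V y) / 2) x - (fun y => (Yt y + Y y) / 2) x)) := by
      intro x
      have h1 := hVe x
      have h2 := hYe x
      simp only []
      linear_combination (Vt x - Yt x + (V x - Y x)) * (h1 - h2)
    rw [hsplit, intervalIntegral.integral_congr (g := fun x => (2*(k*b)) *
        ((Fmap N (fun y => (Vt y + V y) / 2) x - Fmap N (fun y => (Yt y + Y y) / 2) x)
          * ((fun y => (Vt y + V y) / 2) x - (fun y => (Yt y + Y y) / 2) x)))
        (fun x _ => hpt x)]
    rw [intervalIntegral.integral_const_mul, KEY]
    ring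
  -- |deriv p| ≤ K/2 on the interval
  have hKp : ∀ x ∈ Set.Icc (-Real.pi) Real.pi,
      |deriv (fun y => (Vt y + V y) / 2) x| ≤ K/2 := by
    intro x hx
    have hu : Rep s (cVt + cV) (fun x => Vt x + V x) := hRVt.add hRV
    have hdp : deriv (fun y => (Vt y + V y) / 2) x
        = deriv (fun x => Vt x + V x) x / 2 := by
      exact (((hu.differentiable x).hasDerivAt).div_const 2).deriv
    have h1 : |deriv (fun x => Vt x + V x) x| ≤ LinfNorm (deriv (fun x => Vt x + V x)) :=
      abs_le_LinfNorm hu.deriv_eq.continuous hx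
    have h2 : LinfNorm (deriv (fun x => Vt x + V x)) ≤ K := by
      have h3 : 0 ≤ LinfNorm (fun x => Vt x + V x) := LinfNorm_nonneg hu.continuous
      have := hnorm
      unfold norm1inf at this
      linarith
    rw [hdp, abs_div]
    have : |(2:ℝ)| = 2 := by norm_num
    rw [this]
    linarith
  -- |X| ≤ (K/2) * E2
  have hXbound : |X| ≤ (K/2) * E2 := by
    have hintegrand : IntervalIntegrable (fun x =>
        deriv (fun y => (Vt y + V y) / 2) x * ((Vt x + V x) / 2 - (Yt x + Y x) / 2)^2)
        volume (-Real.pi) Real.pi :=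
      (hp1c.mul (((hpc.sub hqc).pow 2))).intervalIntegrable _ _
    have hconst : IntervalIntegrable (fun x =>
        (K/2) * ((Vt x + V x) / 2 - (Yt x + Y x) / 2)^2) volume (-Real.pi) Real.pi :=
      (continuous_const.mul ((hpc.sub hqc).pow 2)).intervalIntegrable _ _
    have hup : X ≤ (K/2) * E2 := by
      rw [hXdef, hE2def, ← intervalIntegral.integral_const_mul]
      apply intervalIntegral.integral_mono_on pi_le hintegrand hconst
      intro x hx
      have h1 := hKp x hx
      have h2 := sq_nonneg ((Vt x + V x) / 2 - (Yt x + Y x) / 2)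
      have := abs_le.mp h1
      nlinarith
    have hlo : -((K/2) * E2) ≤ X := by
      rw [hXdef]
      have : -((K/2) * E2) = ∫ x in (-Real.pi)..Real.pi,
          -((K/2) * ((Vt x + V x) / 2 - (Yt x + Y x) / 2)^2) := by
        rw [intervalIntegral.integral_neg, intervalIntegral.integral_const_mul, hE2def]
      rw [this]
      apply intervalIntegral.integral_mono_on (f := fun x =>
          -(K / 2 * ((Vt x + V x) / 2 - (Yt x + Y x) / 2) ^ 2)) pi_le
          (((continuous_const.mul ((hpc.sub hqc).pow 2)).neg).intervalIntegrable _ _) hintegrand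
      intro x hx
      have h1 := hKp x hx
      have h2 := sq_nonneg ((Vt x + V x) / 2 - (Yt x + Y x) / 2)
      have := abs_le.mp h1
      nlinarith
    rw [abs_le]
    exact ⟨hlo, hup⟩
  -- E2 ≤ (I2 + J2)/2
  have hE2b : E2 ≤ (I2 + J2)/2 := by
    have h1 : E2 ≤ ∫ x in (-Real.pi)..Real.pi, ((Vt x - Yt x)^2 + (V x - Y x)^2)/2 := by
      rw [hE2def]
      apply intervalIntegral.integral_mono_on pi_le
        (((hpc.sub hqc).pow 2).intervalIntegrable _ _)
        ((((hθc.pow 2).add (hηc.pow 2)).div_const 2).intervalIntegrable _ _)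
      intro x _
      show ((Vt x + V x) / 2 - (Yt x + Y x) / 2)^2 ≤ ((Vt x - Yt x)^2 + (V x - Y x)^2)/2
      nlinarith [sq_nonneg ((Vt x - Yt x) - (V x - Y x))]
    have h2 : (∫ x in (-Real.pi)..Real.pi, ((Vt x - Yt x)^2 + (V x - Y x)^2)/2)
        = (I2 + J2)/2 := by
      rw [intervalIntegral.integral_div, intervalIntegral.integral_add
        ((hθc.fun_pow 2).intervalIntegrable _ _) ((hηc.fun_pow 2).intervalIntegrable _ _),
        hI2def, hJ2def]
    linarith
  -- main quadratic inequality
  have hquad : I2 - J2 ≤ C * k * (I2 + J2) := by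
    have h1 : I2 - J2 ≤ k * |b| * |X| := by
      rw [hdelta]
      have : -(k*b) * X ≤ |(-(k*b)) * X| := le_abs_self _
      rw [abs_mul, abs_neg, abs_mul, abs_of_pos hk] at this
      linarith
    have h2 : k * |b| * |X| ≤ k * |b| * ((K/2) * E2) := by
      apply mul_le_mul_of_nonneg_left hXbound
      positivity
    have h3 : k * |b| * ((K/2) * E2) ≤ k * |b| * ((K/2) * ((I2+J2)/2)) := by
      apply mul_le_mul_of_nonneg_left _ (by positivity)
      apply mul_le_mul_of_nonneg_left hE2b (by linarith)
    have : k * |b| * ((K/2) * ((I2+J2)/2)) = C * k * (I2 + J2) := by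
      rw [hCdef]; ring
    linarith
  -- pass to square roots
  set A : ℝ := L2norm (fun x => Vt x - Yt x) with hAdef
  set B : ℝ := L2norm (fun x => V x - Y x) with hBdef
  have hA2 : A^2 = I2 := by
    rw [hAdef]
    exact L2norm_sq _ hI2
  have hB2 : B^2 = J2 := by
    rw [hBdef]
    exact L2norm_sq _ hJ2
  have hA : 0 ≤ A := Real.sqrt_nonneg _
  have hB : 0 ≤ B := Real.sqrt_nonneg _
  have hquad' : A^2 - B^2 ≤ (C*k) * (A^2 + B^2) := by
    rw [hA2, hB2]
    calc I2 - J2 ≤ C * k * (I2 + J2) := hquad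
      _ = (C*k) * (I2 + J2) := by ring
  have ht0 : 0 ≤ C * k := by positivity
  have part1' := stability_algebra1 hA hB ht0 hquad'
  have part1 : A - B ≤ C * k * (A + B) := by linarith
  refine ⟨part1, fun hkk => ?_⟩
  have ht2 : C * k ≤ 1/2 := by
    have h2C : 0 < 2 * C := by positivity
    calc C * k ≤ C * (1/(2*C)) := mul_le_mul_of_nonneg_left hkk hCpos.le
      _ = 1/2 := by field_simp
  have part2 := stability_algebra2 hA hB ht0 ht2 part1'
  calc A ≤ (1 + 4*(C*k))*B := part2
    _ = (1 + 4*C*k)*B := by ring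


end KdVSpec
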